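/- Let n ≥ 2, k ≥ 1 with n ≥ 2k, and δ ∈ (0, 1]. Let A be a symmetric n×n matrix with entries in [0,1] and zero diagonal, let D be the diagonal matrix with D_{ii} = Σ_j A_{ij}, assumed strictly positive, and let Δ be a diagonal matrix with Δ_{ii} ≥ δ for all i. Set P = D^{−1}A and Π = Δ^{−1}A. Then, with ‖M‖_∞ denoting the maximum absolute value of an entry: ‖P^k − (1/(n−1)^k)·Π^k‖_∞ ≤ 2·k·δ^{−k}·max_i |D_{ii} − (n−1)·Δ_{ii}| / (D_{ii}·(n−1)·Δ_{ii}). -/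

import Mathlib

open Finset Matrix

private lemma pow_nonneg_rowsum {n : ℕ} (Q : Matrix (Fin n) (Fin n) ℝ) (c : ℝ) (hc : 1 ≤ c)
    (h0 : ∀ i j, 0 ≤ Q i j) (hs : ∀ i, ∑ j, Q i j ≤ c) (r : ℕ) :
    (∀ i j, 0 ≤ (Q ^ r) i j) ∧ ∀ i, ∑ j, (Q ^ r) i j ≤ c ^ r := by
  induction r with
  | zero =>
    refine ⟨fun i j => ?_, fun i => ?_⟩
    · simp only [pow_zero, Matrix.one_apply]
      split <;> norm_num
    · simp [pow_zero, Matrix.one_apply]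
  | succ r ih =>
    refine ⟨fun i j => ?_, fun i => ?_⟩
    · rw [pow_succ, Matrix.mul_apply]
      exact Finset.sum_nonneg fun a _ => mul_nonneg (ih.1 i a) (h0 a j)
    · rw [pow_succ]
      calc ∑ j, (Q ^ r * Q) i j = ∑ a, (Q ^ r) i a * ∑ j, Q a j := by
            simp only [Matrix.mul_apply]
            rw [Finset.sum_comm]
            exact Finset.sum_congr rfl fun a _ => (Finset.mul_sum _ _ _).symm
        _ ≤ ∑ a, (Q ^ r) i a * c :=
            Finset.sum_le_sum fun a _ => mul_le_mul_of_nonneg_left (hs a) (ih.1 i a)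
        _ = (∑ a, (Q ^ r) i a) * c := by rw [Finset.sum_mul]
        _ ≤ c ^ r * c := mul_le_mul_of_nonneg_right (ih.2 i) (by linarith)
        _ = c ^ (r + 1) := (pow_succ c r).symm

private lemma telescope_pow {R : Type*} [Ring R] (x y : R) (k : ℕ) :
    x ^ k - y ^ k = ∑ m ∈ Finset.range k, x ^ m * (x - y) * y ^ (k - 1 - m) := by
  induction k with
  | zero => simp
  | succ k ih =>
    rw [Finset.sum_range_succ]
    have h1 : ∀ m ∈ Finset.range k, x ^ m * (x - y) * y ^ (k + 1 - 1 - m)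
        = x ^ m * (x - y) * y ^ (k - 1 - m) * y := by
      intro m hm
      rw [Finset.mem_range] at hm
      have h2 : k + 1 - 1 - m = (k - 1 - m) + 1 := by omega
      rw [h2, pow_succ, ← mul_assoc]
    rw [Finset.sum_congr rfl h1, ← Finset.sum_mul, ← ih]
    have h3 : k + 1 - 1 - k = 0 := by omega
    rw [h3, pow_zero, mul_one]
    noncomm_ring

private lemma main_aux {n : ℕ} (k : ℕ) (hn1 : (1:ℝ) ≤ (n:ℝ) - 1)
    (δ ε : ℝ) (hδ0 : 0 < δ) (hδ1 : δ ≤ 1) (hε0 : 0 ≤ ε)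
    (P Q : Matrix (Fin n) (Fin n) ℝ)
    (hP0 : ∀ i j, 0 ≤ P i j) (hPs : ∀ i, ∑ j, P i j ≤ 1)
    (hQ0 : ∀ i j, 0 ≤ Q i j) (hQs : ∀ i, ∑ j, Q i j ≤ δ⁻¹)
    (hQe : ∀ i j, Q i j ≤ (((n:ℝ)-1) * δ)⁻¹)
    (hE1 : ∀ a b, |P a b - Q a b| ≤ ε)
    (hEs : ∀ a, ∑ b, |P a b - Q a b| ≤ ((n:ℝ)-1) * ε)
    (i j : Fin n) :
    |(P ^ k) i j - (Q ^ k) i j| ≤ k * (δ ^ k)⁻¹ * ε := by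
  have hn1p : (0:ℝ) < (n:ℝ) - 1 := by linarith
  have hδinv : (1:ℝ) ≤ δ⁻¹ := (one_le_inv₀ hδ0).mpr hδ1
  -- entrywise bound on Q ^ r for r ≥ 1
  have hQre : ∀ r, 1 ≤ r → ∀ b j', (Q ^ r) b j' ≤ δ⁻¹ ^ r * ((n:ℝ)-1)⁻¹ := by
    intro r hr b j'
    obtain ⟨s, rfl⟩ : ∃ s, r = s + 1 := ⟨r - 1, by omega⟩
    rw [pow_succ, Matrix.mul_apply]
    have hQs' := pow_nonneg_rowsum Q δ⁻¹ hδinv hQ0 hQs s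
    calc ∑ c, (Q ^ s) b c * Q c j' ≤ ∑ c, (Q ^ s) b c * (((n:ℝ)-1) * δ)⁻¹ :=
          Finset.sum_le_sum fun c _ => mul_le_mul_of_nonneg_left (hQe c j') (hQs'.1 b c)
      _ = (∑ c, (Q ^ s) b c) * (((n:ℝ)-1) * δ)⁻¹ := by rw [Finset.sum_mul]
      _ ≤ δ⁻¹ ^ s * (((n:ℝ)-1) * δ)⁻¹ :=
          mul_le_mul_of_nonneg_right (hQs'.2 b)
            (inv_nonneg.mpr (le_of_lt (mul_pos hn1p hδ0)))
      _ = δ⁻¹ ^ (s+1) * ((n:ℝ)-1)⁻¹ := by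
          rw [mul_inv, pow_succ]; ring
  -- bound on ((P - Q) * Q ^ r) entries
  have hmid : ∀ r, ∀ a j', |((P - Q) * Q ^ r) a j'| ≤ ε * δ⁻¹ ^ r := by
    intro r a j'
    rcases Nat.eq_zero_or_pos r with hr | hr
    · subst hr
      rw [pow_zero, mul_one, pow_zero, mul_one]
      simpa [Matrix.sub_apply] using hE1 a j'
    · rw [Matrix.mul_apply]
      have hQnn := (pow_nonneg_rowsum Q δ⁻¹ hδinv hQ0 hQs r).1
      have hne : ((n:ℝ)-1) ≠ 0 := by linarith
      calc |∑ b, (P - Q) a b * (Q ^ r) b j'|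
          ≤ ∑ b, |(P - Q) a b * (Q ^ r) b j'| := Finset.abs_sum_le_sum_abs _ _
        _ = ∑ b, |(P - Q) a b| * (Q ^ r) b j' := by
            refine Finset.sum_congr rfl fun b _ => ?_
            rw [abs_mul, abs_of_nonneg (hQnn b j')]
        _ ≤ ∑ b, |(P - Q) a b| * (δ⁻¹ ^ r * ((n:ℝ)-1)⁻¹) :=
            Finset.sum_le_sum fun b _ =>
              mul_le_mul_of_nonneg_left (hQre r hr b j') (abs_nonneg _)
        _ = (∑ b, |(P - Q) a b|) * (δ⁻¹ ^ r * ((n:ℝ)-1)⁻¹) := by rw [Finset.sum_mul]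
        _ ≤ (((n:ℝ)-1) * ε) * (δ⁻¹ ^ r * ((n:ℝ)-1)⁻¹) := by
            refine mul_le_mul_of_nonneg_right ?_ ?_
            · simpa [Matrix.sub_apply] using hEs a
            · have : (0:ℝ) ≤ δ⁻¹ ^ r := by positivity
              exact mul_nonneg this (inv_nonneg.mpr (le_of_lt hn1p))
        _ = ε * δ⁻¹ ^ r := by field_simp
  -- per-term bound
  have hterm : ∀ m, m < k → |(P ^ m * ((P - Q) * Q ^ (k - 1 - m))) i j| ≤ ε * (δ ^ k)⁻¹ := by
    intro m hm
    have hPnn := pow_nonneg_rowsum P 1 le_rfl hP0 hPs m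
    have hb : ∀ a, |((P - Q) * Q ^ (k-1-m)) a j| ≤ ε * (δ ^ k)⁻¹ := by
      intro a
      refine le_trans (hmid _ a j) ?_
      have h1 : δ⁻¹ ^ (k - 1 - m) ≤ δ⁻¹ ^ k := pow_le_pow_right₀ hδinv (by omega)
      calc ε * δ⁻¹ ^ (k-1-m) ≤ ε * δ⁻¹ ^ k := mul_le_mul_of_nonneg_left h1 hε0
        _ = ε * (δ ^ k)⁻¹ := by rw [inv_pow]
    have hconst : (0:ℝ) ≤ ε * (δ ^ k)⁻¹ := mul_nonneg hε0 (by positivity)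
    rw [Matrix.mul_apply]
    calc |∑ a, (P ^ m) i a * ((P - Q) * Q ^ (k-1-m)) a j|
        ≤ ∑ a, (P ^ m) i a * |((P - Q) * Q ^ (k-1-m)) a j| := by
          refine le_trans (Finset.abs_sum_le_sum_abs _ _) ?_
          refine le_of_eq (Finset.sum_congr rfl fun a _ => ?_)
          rw [abs_mul, abs_of_nonneg (hPnn.1 i a)]
      _ ≤ ∑ a, (P ^ m) i a * (ε * (δ ^ k)⁻¹) :=
          Finset.sum_le_sum fun a _ => mul_le_mul_of_nonneg_left (hb a) (hPnn.1 i a)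
      _ = (∑ a, (P ^ m) i a) * (ε * (δ ^ k)⁻¹) := by rw [Finset.sum_mul]
      _ ≤ 1 * (ε * (δ ^ k)⁻¹) := by
          refine mul_le_mul_of_nonneg_right ?_ hconst
          simpa using hPnn.2 i
      _ = ε * (δ ^ k)⁻¹ := one_mul _
  -- telescoping
  have htel : (P ^ k) i j - (Q ^ k) i j
      = ∑ m ∈ Finset.range k, (P ^ m * ((P - Q) * Q ^ (k-1-m))) i j := by
    have h2 : (P ^ k - Q ^ k) i j
        = (∑ m ∈ Finset.range k, P ^ m * (P - Q) * Q ^ (k-1-m)) i j := by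
      rw [telescope_pow P Q k]
    simpa [Matrix.sub_apply, Matrix.sum_apply, mul_assoc] using h2
  rw [htel]
  refine le_trans (Finset.abs_sum_le_sum_abs _ _) ?_
  refine le_trans (Finset.sum_le_sum fun m hm => hterm m (Finset.mem_range.mp hm)) ?_
  rw [Finset.sum_const, Finset.card_range, nsmul_eq_mul]
  exact le_of_eq (by ring)

/-- Deterministic comparison of powers of the random-walk transition matrix `P = D⁻¹A`
with powers of the kernel-normalized matrix `Π = Δ⁻¹A`: uniformly over entries,
`‖P^k − (1/(n−1)^k)·Π^k‖_∞ ≤ 2k·δ^{−k}·max_i |D_{ii} − (n−1)Δ_{ii}| / (D_{ii}·(n−1)·Δ_{ii})`. -/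
theorem stmt12 (n k : ℕ) (hn : 2 ≤ n) (hk : 1 ≤ k) (hnk : 2 * k ≤ n)
    (δ : ℝ) (hδ0 : 0 < δ) (hδ1 : δ ≤ 1)
    (A : Matrix (Fin n) (Fin n) ℝ) (hsymm : A.IsSymm)
    (h01 : ∀ i j, A i j ∈ Set.Icc (0 : ℝ) 1) (hdiag : ∀ i, A i i = 0)
    (hD : ∀ i, 0 < ∑ j, A i j)
    (Δ : Fin n → ℝ) (hΔ : ∀ i, δ ≤ Δ i) :
    ∀ i j : Fin n,
      |((Matrix.of fun i' j' : Fin n => A i' j' / ∑ l, A i' l) ^ k) i j -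
          (((n : ℝ) - 1) ^ k)⁻¹ *
            (((Matrix.of fun i' j' : Fin n => A i' j' / Δ i') ^ k) i j)| ≤
        2 * k * (δ ^ k)⁻¹ *
          ⨆ i' : Fin n, |(∑ j', A i' j') - ((n : ℝ) - 1) * Δ i'| /
            ((∑ j', A i' j') * (((n : ℝ) - 1) * Δ i')) := by
  intro i j
  have hn0 : 0 < n := by omega
  haveI : Nonempty (Fin n) := ⟨⟨0, hn0⟩⟩
  have hn1 : (1:ℝ) ≤ (n:ℝ) - 1 := by
    have h2 : (2:ℝ) ≤ (n:ℝ) := by exact_mod_cast hn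
    linarith
  have hn1p : (0:ℝ) < (n:ℝ) - 1 := by linarith
  have hne : ((n:ℝ) - 1) ≠ 0 := ne_of_gt hn1p
  have hΔpos : ∀ a, 0 < Δ a := fun a => lt_of_lt_of_le hδ0 (hΔ a)
  have hA0 : ∀ a b, 0 ≤ A a b := fun a b => (h01 a b).1
  have hA1 : ∀ a b, A a b ≤ 1 := fun a b => (h01 a b).2
  set P : Matrix (Fin n) (Fin n) ℝ :=
    Matrix.of fun i' j' : Fin n => A i' j' / ∑ l, A i' l with hPdef
  set Pi : Matrix (Fin n) (Fin n) ℝ :=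
    Matrix.of fun i' j' : Fin n => A i' j' / Δ i' with hPidef
  set Q : Matrix (Fin n) (Fin n) ℝ := (((n:ℝ) - 1)⁻¹) • Pi with hQdef
  set f : Fin n → ℝ := fun i' => |(∑ j', A i' j') - ((n : ℝ) - 1) * Δ i'| /
      ((∑ j', A i' j') * (((n : ℝ) - 1) * Δ i')) with hfdef
  set ε : ℝ := ⨆ i', f i' with hεdef
  -- rewrite the goal's second matrix power as Q ^ k
  have hQk : (((n:ℝ) - 1) ^ k)⁻¹ * ((Pi ^ k) i j) = (Q ^ k) i j := by
    rw [hQdef, smul_pow, Matrix.smul_apply, smul_eq_mul, inv_pow]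
  rw [hQk]
  -- properties of f and ε
  have hden : ∀ a, 0 < (∑ j', A a j') * (((n:ℝ) - 1) * Δ a) :=
    fun a => mul_pos (hD a) (mul_pos hn1p (hΔpos a))
  have hf0 : ∀ a, 0 ≤ f a := fun a => div_nonneg (abs_nonneg _) (le_of_lt (hden a))
  have hfle : ∀ a, f a ≤ ε := fun a =>
    le_ciSup (Set.Finite.bddAbove (Set.finite_range f)) a
  have hε0 : 0 ≤ ε := le_trans (hf0 i) (hfle i)
  -- D bounds
  have hDle : ∀ a, (∑ j', A a j') ≤ (n:ℝ) - 1 := by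
    intro a
    have h1 : (∑ j', A a j') = ∑ b ∈ Finset.univ.erase a, A a b :=
      (Finset.sum_erase _ (hdiag a)).symm
    rw [h1]
    calc ∑ b ∈ Finset.univ.erase a, A a b ≤ ∑ _b ∈ Finset.univ.erase a, (1:ℝ) :=
        Finset.sum_le_sum fun b _ => hA1 a b
      _ = ((n:ℝ) - 1) := by
        rw [Finset.sum_const, nsmul_eq_mul, mul_one,
          Finset.card_erase_of_mem (Finset.mem_univ a), Finset.card_univ,
          Fintype.card_fin, Nat.cast_sub (by omega : 1 ≤ n), Nat.cast_one]
  -- key entrywise identity for P - Q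
  have hEabs : ∀ a b, |P a b - Q a b| = A a b * f a := by
    intro a b
    have hDne : (∑ j', A a j') ≠ 0 := ne_of_gt (hD a)
    have hΔne : Δ a ≠ 0 := ne_of_gt (hΔpos a)
    have key : P a b - Q a b
        = A a b * (((((n:ℝ) - 1) * Δ a) - ∑ j', A a j') /
            ((∑ j', A a j') * (((n:ℝ) - 1) * Δ a))) := by
      rw [hPdef, hQdef, hPidef]
      simp only [Matrix.smul_apply, Matrix.of_apply, smul_eq_mul]
      field_simp
    rw [key, abs_mul, abs_of_nonneg (hA0 a b), hfdef]
    congr 1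
    rw [abs_div, abs_of_pos (hden a), abs_sub_comm]
  -- hypotheses of main_aux
  have hP0 : ∀ a b, 0 ≤ P a b := fun a b =>
    div_nonneg (hA0 a b) (le_of_lt (hD a))
  have hPs : ∀ a, ∑ b, P a b ≤ 1 := by
    intro a
    have : ∑ b, P a b = (∑ b, A a b) / (∑ l, A a l) := by
      simp only [hPdef, Matrix.of_apply, ← Finset.sum_div]
    rw [this, div_self (ne_of_gt (hD a))]
  have hQ0 : ∀ a b, 0 ≤ Q a b := by
    intro a b
    rw [hQdef, hPidef]
    simp only [Matrix.smul_apply, Matrix.of_apply, smul_eq_mul]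
    exact mul_nonneg (inv_nonneg.mpr (le_of_lt hn1p))
      (div_nonneg (hA0 a b) (le_of_lt (hΔpos a)))
  have hQs : ∀ a, ∑ b, Q a b ≤ δ⁻¹ := by
    intro a
    have h1 : ∑ b, Q a b = ((n:ℝ) - 1)⁻¹ * ((∑ b, A a b) / Δ a) := by
      simp only [hQdef, hPidef, Matrix.smul_apply, Matrix.of_apply, smul_eq_mul,
        ← Finset.mul_sum, ← Finset.sum_div]
    rw [h1]
    calc ((n:ℝ) - 1)⁻¹ * ((∑ b, A a b) / Δ a)
        ≤ ((n:ℝ) - 1)⁻¹ * (((n:ℝ) - 1) / δ) := by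
          refine mul_le_mul_of_nonneg_left ?_ (inv_nonneg.mpr (le_of_lt hn1p))
          exact div_le_div₀ (le_of_lt hn1p) (hDle a) hδ0 (hΔ a)
      _ = δ⁻¹ := by field_simp
  have hQe : ∀ a b, Q a b ≤ (((n:ℝ) - 1) * δ)⁻¹ := by
    intro a b
    rw [hQdef, hPidef]
    simp only [Matrix.smul_apply, Matrix.of_apply, smul_eq_mul]
    calc ((n:ℝ) - 1)⁻¹ * (A a b / Δ a) ≤ ((n:ℝ) - 1)⁻¹ * (1 / δ) := by
          refine mul_le_mul_of_nonneg_left ?_ (inv_nonneg.mpr (le_of_lt hn1p))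
          exact div_le_div₀ zero_le_one (hA1 a b) hδ0 (hΔ a)
      _ = (((n:ℝ) - 1) * δ)⁻¹ := by rw [mul_inv, one_div]
  have hE1 : ∀ a b, |P a b - Q a b| ≤ ε := by
    intro a b
    rw [hEabs a b]
    calc A a b * f a ≤ 1 * f a := mul_le_mul_of_nonneg_right (hA1 a b) (hf0 a)
      _ = f a := one_mul _
      _ ≤ ε := hfle a
  have hEs : ∀ a, ∑ b, |P a b - Q a b| ≤ ((n:ℝ) - 1) * ε := by
    intro a
    have h1 : ∑ b, |P a b - Q a b| = (∑ b, A a b) * f a := by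
      simp only [hEabs, ← Finset.sum_mul]
    rw [h1]
    exact mul_le_mul (hDle a) (hfle a) (hf0 a) (by linarith)
  have hmain := main_aux k hn1 δ ε hδ0 hδ1 hε0 P Q hP0 hPs hQ0 hQs hQe hE1 hEs i j
  refine le_trans hmain ?_
  have hk1 : (1:ℝ) ≤ (k:ℝ) := by exact_mod_cast hk
  have h2 : (0:ℝ) ≤ (δ ^ k)⁻¹ * ε := mul_nonneg (by positivity) hε0
  nlinarith [mul_nonneg (le_trans zero_le_one hk1) h2]
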